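/- arXiv:2409.15074 — 3 statements merged into one kernel-verified Lean document; each statement's English description precedes it below -/
import Mathlib

section
/- Let τ ∈ ℂ with |τ| = 1 and let h : 𝔻 → ℂ be a holomorphic injective function which is starlike at infinity with respect to τ, i.e. Im( conj(τ) (τ - z)^2 h'(z) ) ≥ 0 for all z ∈ 𝔻. For w ∈ 𝔻 let T_w(z) = (w - z)/(1 - conj(w) z) be the disk automorphism interchanging w and 0. Then there exists a holomorphic function u : 𝔻 → ℂ with Re u(z) ≥ 0 for all z ∈ 𝔻 such that (h ∘ T_w)'(z) = i T_w(τ) · u(z) / (T_w(τ) - z)^2 for all z ∈ 𝔻. -/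
open Metric MeasureTheory Set

set_option maxHeartbeats 1000000 in
/-- If `h` is conformal on `𝔻` and starlike at infinity with respect to `τ ∈ 𝕋`,
and `T_w(z) = (w-z)/(1 - conj w · z)`, then there is a holomorphic `u` with
`Re u ≥ 0` on `𝔻` such that `(h ∘ T_w)'(z) = i T_w(τ) u(z) / (T_w(τ) - z)²`. -/
theorem starlike_composition_derivative
    (τ : ℂ) (hτ : ‖τ‖ = 1)
    (h : ℂ → ℂ)
    (hholo : DifferentiableOn ℂ h (ball (0:ℂ) 1))
    (hinj : Set.InjOn h (ball (0:ℂ) 1))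
    (hstar : ∀ z ∈ ball (0:ℂ) 1, 0 ≤ ((starRingEnd ℂ) τ * (τ - z) ^ 2 * deriv h z).im)
    (w : ℂ) (hw : w ∈ ball (0:ℂ) 1) :
    ∃ u : ℂ → ℂ, DifferentiableOn ℂ u (ball (0:ℂ) 1) ∧
      (∀ z ∈ ball (0:ℂ) 1, 0 ≤ (u z).re) ∧
      ∀ z ∈ ball (0:ℂ) 1,
        deriv (fun ζ => h ((w - ζ) / (1 - (starRingEnd ℂ) w * ζ))) z =
          Complex.I * ((w - τ) / (1 - (starRingEnd ℂ) w * τ)) * u z /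
            ((w - τ) / (1 - (starRingEnd ℂ) w * τ) - z) ^ 2 := by
  have hw1 : ‖w‖ < 1 := by simpa using mem_ball_zero_iff.mp hw
  have hτ0 : τ ≠ 0 := by
    intro h0; rw [h0] at hτ; simp at hτ
  have hττ : τ * (starRingEnd ℂ) τ = 1 := by
    rw [Complex.mul_conj, Complex.normSq_eq_norm_sq, hτ]; norm_num
  have hct : (starRingEnd ℂ) τ = τ⁻¹ := by
    apply eq_inv_of_mul_eq_one_left
    linear_combination hττ
  -- nonvanishing of denominators
  have hden : ∀ z : ℂ, ‖z‖ ≤ 1 → ‖z‖ * ‖w‖ < 1 →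
      (1 : ℂ) - (starRingEnd ℂ) w * z ≠ 0 := by
    intro z hz hlt h0
    have h1 : (starRingEnd ℂ) w * z = 1 := by linear_combination -h0
    have h2 : ‖(starRingEnd ℂ) w * z‖ = ‖(1:ℂ)‖ := by rw [h1]
    rw [norm_mul, Complex.norm_conj, norm_one, mul_comm] at h2
    exact absurd h2 (ne_of_lt hlt)
  have hdball : ∀ z : ℂ, ‖z‖ < 1 → (1 : ℂ) - (starRingEnd ℂ) w * z ≠ 0 := by
    intro z hz
    exact hden z hz.le (by nlinarith [norm_nonneg z, norm_nonneg w])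
  have hdτ : (1 : ℂ) - (starRingEnd ℂ) w * τ ≠ 0 :=
    hden τ hτ.le (by rw [hτ, one_mul]; exact hw1)
  have hdτ' : (1 : ℂ) - w * (starRingEnd ℂ) τ ≠ 0 := by
    intro h0
    apply hdτ
    have := congrArg (starRingEnd ℂ) h0
    simpa [map_sub, map_mul, mul_comm] using this
  set σ : ℂ := (w - τ) / (1 - (starRingEnd ℂ) w * τ) with hσdef
  -- |σ| = 1
  have habsnum : ‖w - τ‖ = ‖1 - (starRingEnd ℂ) w * τ‖ := by
    have : (starRingEnd ℂ) (1 - (starRingEnd ℂ) w * τ) = (starRingEnd ℂ) τ * (τ - w) := by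
      simp [map_sub, map_mul]
      linear_combination -hττ
    calc ‖w - τ‖ = ‖(starRingEnd ℂ) τ * (τ - w)‖ := by
          rw [norm_mul, Complex.norm_conj, hτ, one_mul, norm_sub_rev]
      _ = ‖1 - (starRingEnd ℂ) w * τ‖ := by rw [← this, Complex.norm_conj]
  have habsσ : ‖σ‖ = 1 := by
    rw [hσdef, norm_div, habsnum, div_self]
    exact norm_ne_zero_iff.mpr hdτ
  have hσconj : σ * (starRingEnd ℂ) σ = 1 := by
    rw [Complex.mul_conj, Complex.normSq_eq_norm_sq, habsσ]; norm_num
  have hσ0 : σ ≠ 0 := by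
    intro h0; rw [h0] at habsσ; simp at habsσ
  -- T maps ball to ball
  have hT : ∀ z : ℂ, ‖z‖ < 1 →
      ‖(w - z) / (1 - (starRingEnd ℂ) w * z)‖ < 1 := by
    intro z hz
    have hd := hdball z hz
    have hkey : Complex.normSq (1 - (starRingEnd ℂ) w * z) - Complex.normSq (w - z)
        = (1 - Complex.normSq w) * (1 - Complex.normSq z) := by
      simp [Complex.normSq_apply, Complex.sub_re, Complex.sub_im, Complex.mul_re,
        Complex.mul_im, Complex.one_re, Complex.one_im]
      ring
    have hnw : Complex.normSq w < 1 := by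
      rw [← Complex.sq_norm]; nlinarith [norm_nonneg w]
    have hnz : Complex.normSq z < 1 := by
      rw [← Complex.sq_norm]; nlinarith [norm_nonneg z]
    have hlt : Complex.normSq (w - z) < Complex.normSq (1 - (starRingEnd ℂ) w * z) := by
      nlinarith
    have habslt : ‖w - z‖ < ‖1 - (starRingEnd ℂ) w * z‖ := by
      have h2 : ‖w - z‖ ^ 2 < ‖1 - (starRingEnd ℂ) w * z‖ ^ 2 := by
        rw [Complex.sq_norm, Complex.sq_norm]; exact hlt
      exact lt_of_pow_lt_pow_left₀ 2 (norm_nonneg _) h2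
    rw [norm_div, div_lt_one (norm_pos_iff.mpr hd)]
    exact habslt
  -- derivative of the composition
  have hgderiv : ∀ z : ℂ, ‖z‖ < 1 →
      HasDerivAt (fun ζ => h ((w - ζ) / (1 - (starRingEnd ℂ) w * ζ)))
        (deriv h ((w - z) / (1 - (starRingEnd ℂ) w * z)) *
          ((w * (starRingEnd ℂ) w - 1) / (1 - (starRingEnd ℂ) w * z) ^ 2)) z := by
    intro z hz
    have hd := hdball z hz
    have hnum : HasDerivAt (fun ζ : ℂ => w - ζ) (-1) z := by
      simpa using (hasDerivAt_id z).const_sub w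
    have hden2 : HasDerivAt (fun ζ : ℂ => 1 - (starRingEnd ℂ) w * ζ)
        (-(starRingEnd ℂ) w) z := by
      simpa using ((hasDerivAt_id z).const_mul ((starRingEnd ℂ) w)).const_sub (1:ℂ)
    have hTd := hnum.div hden2 hd
    have hmem : (w - z) / (1 - (starRingEnd ℂ) w * z) ∈ ball (0:ℂ) 1 := by
      simpa using hT z hz
    have hh : HasDerivAt h (deriv h ((w - z) / (1 - (starRingEnd ℂ) w * z)))
        ((w - z) / (1 - (starRingEnd ℂ) w * z)) :=
      (hholo.differentiableAt (isOpen_ball.mem_nhds hmem)).hasDerivAt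
    have hcomp := hh.comp z hTd
    simp only [Function.comp_def] at hcomp
    rw [show (-1 * (1 - (starRingEnd ℂ) w * z) - (w - z) * -(starRingEnd ℂ) w)
      = w * (starRingEnd ℂ) w - 1 from by ring] at hcomp
    exact hcomp
  set g : ℂ → ℂ := fun ζ => h ((w - ζ) / (1 - (starRingEnd ℂ) w * ζ)) with hgdef
  have hgdiff : DifferentiableOn ℂ g (ball (0:ℂ) 1) := fun z hz =>
    ((hgderiv z (by simpa using mem_ball_zero_iff.mp hz)).differentiableAt).differentiableWithinAt
  have hDdiff : DifferentiableOn ℂ (deriv g) (ball (0:ℂ) 1) :=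
    ((hgdiff.analyticOnNhd isOpen_ball).deriv).differentiableOn
  refine ⟨fun z => -Complex.I * (starRingEnd ℂ) σ * (σ - z) ^ 2 * deriv g z, ?_, ?_, ?_⟩
  · exact (((differentiableOn_const _).mul
      (((differentiableOn_const σ).sub differentiableOn_id).pow 2))).mul hDdiff
  · -- nonnegativity of the real part
    intro z hz
    have hz' : ‖z‖ < 1 := by simpa using mem_ball_zero_iff.mp hz
    have hd := hdball z hz'
    have hmem : (w - z) / (1 - (starRingEnd ℂ) w * z) ∈ ball (0:ℂ) 1 := by
      simpa using hT z hz'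
    have hwτ : (1 : ℂ) - w * τ⁻¹ ≠ 0 := by rw [← hct]; exact hdτ'
    have hQ : -Complex.I * (starRingEnd ℂ) σ * (σ - z) ^ 2 * deriv g z
        = ((1 - w * (starRingEnd ℂ) w) / ((1 - (starRingEnd ℂ) w * τ) * (1 - w * (starRingEnd ℂ) τ)))
          * (-Complex.I * ((starRingEnd ℂ) τ *
              (τ - (w - z) / (1 - (starRingEnd ℂ) w * z)) ^ 2 *
              deriv h ((w - z) / (1 - (starRingEnd ℂ) w * z)))) := by
      rw [(hgderiv z hz').deriv]
      have hcσ : (starRingEnd ℂ) σ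
          = ((starRingEnd ℂ) w - (starRingEnd ℂ) τ) / (1 - w * (starRingEnd ℂ) τ) := by
        rw [hσdef]
        simp [map_div₀, map_sub, map_mul]
      have hN1 : σ - z = (w - τ - z + (starRingEnd ℂ) w * τ * z) / (1 - (starRingEnd ℂ) w * τ) := by
        rw [hσdef]
        rw [eq_div_iff hdτ, sub_mul, div_mul_cancel₀ _ hdτ]
        ring
      have hN2 : τ - (w - z) / (1 - (starRingEnd ℂ) w * z)
          = -(w - τ - z + (starRingEnd ℂ) w * τ * z) / (1 - (starRingEnd ℂ) w * z) := by
        rw [eq_div_iff hd, sub_mul, div_mul_cancel₀ _ hd]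
        ring
      have hτw : τ - w ≠ 0 := by
        intro h0
        have hew : τ = w := by linear_combination h0
        rw [← hew, hτ] at hw1
        exact lt_irrefl 1 hw1
      rw [hN1, hN2, hcσ, hct,
        show (1 : ℂ) - w * τ⁻¹ = (τ - w) / τ from by field_simp,
        show (starRingEnd ℂ) w - τ⁻¹ = ((starRingEnd ℂ) w * τ - 1) / τ from by field_simp]
      field_simp
      ring
    show 0 ≤ (-Complex.I * (starRingEnd ℂ) σ * (σ - z) ^ 2 * deriv g z).re
    rw [hQ]
    have h1 : (1 : ℂ) - w * (starRingEnd ℂ) w = ((1 - Complex.normSq w : ℝ) : ℂ) := by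
      rw [Complex.ofReal_sub, Complex.ofReal_one, ← Complex.mul_conj]
    have h2 : (1 - (starRingEnd ℂ) w * τ) * (1 - w * (starRingEnd ℂ) τ)
        = ((Complex.normSq (1 - (starRingEnd ℂ) w * τ) : ℝ) : ℂ) := by
      rw [← Complex.mul_conj]
      congr 1
      simp [map_sub, map_mul]
    rw [h1, h2, ← Complex.ofReal_div, Complex.re_ofReal_mul]
    apply mul_nonneg
    · apply div_nonneg
      · have : Complex.normSq w < 1 := by
          rw [← Complex.sq_norm]; nlinarith [norm_nonneg w]
        linarith
      · exact Complex.normSq_nonneg _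
    · have hst := hstar _ hmem
      simpa using hst
  · -- the derivative identity
    intro z hz
    have hz' : ‖z‖ < 1 := by simpa using mem_ball_zero_iff.mp hz
    have hσz : σ - z ≠ 0 := by
      intro h0
      have : σ = z := by linear_combination h0
      rw [← this] at hz'
      rw [habsσ] at hz'
      exact lt_irrefl 1 hz'
    show deriv g z = Complex.I * σ *
        (-Complex.I * (starRingEnd ℂ) σ * (σ - z) ^ 2 * deriv g z) / (σ - z) ^ 2
    rw [eq_div_iff (pow_ne_zero 2 hσz)]
    linear_combination (-(σ - z) ^ 2 * deriv g z) * hσconj +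
      ((starRingEnd ℂ) σ * σ * (σ - z) ^ 2 * deriv g z) * Complex.I_mul_I
end

section
/- Let p ∈ (0,2], let w ∈ ℂ with |w| < 1, and let k ∈ ℂ with |k| = 1. Then p · Re( 2 k w / (1 - k w)^2 ) ≤ ( (4 - p) |w|^2 + p ) / |1 - k w|^2. More precisely, ( (4 - p)|w|^2 + p ) / |1 - k w|^2 - p Re( 2 k w / (1 - k w)^2 ) ≥ ( (4 - p)|w|^2 - 2 p |w| + p ) / |1 - k w|^2 ≥ 0. -/
open Metric MeasureTheory Set

/-- The elementary estimate underlying the Löwner-chain monotonicity: for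
`p ∈ (0,2]`, `|w| < 1` and `|k| = 1`,
`p Re(2kw/(1-kw)²) ≤ ((4-p)|w|² + p)/|1-kw|²`, and more precisely
`((4-p)|w|² + p)/|1-kw|² - p Re(2kw/(1-kw)²) ≥ ((4-p)|w|² - 2p|w| + p)/|1-kw|² ≥ 0`. -/
theorem lowner_key_inequality
    (p : ℝ) (hp₁ : 0 < p) (hp₂ : p ≤ 2)
    (w : ℂ) (hw : ‖w‖ < 1)
    (k : ℂ) (hk : ‖k‖ = 1) :
    p * (2 * k * w / (1 - k * w) ^ 2).re
        ≤ ((4 - p) * ‖w‖ ^ 2 + p) / ‖1 - k * w‖ ^ 2 ∧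
    ((4 - p) * ‖w‖ ^ 2 - 2 * p * ‖w‖ + p) / ‖1 - k * w‖ ^ 2
        ≤ ((4 - p) * ‖w‖ ^ 2 + p) / ‖1 - k * w‖ ^ 2 -
            p * (2 * k * w / (1 - k * w) ^ 2).re ∧
    0 ≤ ((4 - p) * ‖w‖ ^ 2 - 2 * p * ‖w‖ + p) /
          ‖1 - k * w‖ ^ 2 := by
  set t := ‖w‖ with ht
  have ht0 : 0 ≤ t := norm_nonneg w
  have hd0 : ‖1 - k * w‖ ≠ 0 := by
    intro h
    have : (1 : ℂ) - k * w = 0 := by simpa using norm_eq_zero.mp h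
    have h1 : ‖k * w‖ = 1 := by
      have : (1 : ℂ) = k * w := by linear_combination this
      rw [← this]; simp
    rw [norm_mul, hk, one_mul] at h1
    rw [← ht] at h1; linarith
  have hdpos : 0 < ‖1 - k * w‖ ^ 2 :=
    pow_pos ((norm_nonneg _).lt_of_ne (Ne.symm hd0)) 2
  set d := ‖1 - k * w‖ ^ 2 with hdd
  have habs : ‖2 * k * w / (1 - k * w) ^ 2‖ = 2 * t / d := by
    rw [norm_div, norm_mul, norm_mul, norm_pow, Complex.norm_two, hk]; ring
  have hre : (2 * k * w / (1 - k * w) ^ 2).re ≤ 2 * t / d := by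
    calc (2 * k * w / (1 - k * w) ^ 2).re ≤ ‖2 * k * w / (1 - k * w) ^ 2‖ :=
          Complex.re_le_norm _
      _ = 2 * t / d := habs
  have hquad : 0 ≤ (4 - p) * t ^ 2 - 2 * p * t + p := by
    nlinarith [sq_nonneg (t - 1), sq_nonneg t]
  have h3 : 0 ≤ ((4 - p) * t ^ 2 - 2 * p * t + p) / d := div_nonneg hquad hdpos.le
  have h2 : ((4 - p) * t ^ 2 - 2 * p * t + p) / d
      ≤ ((4 - p) * t ^ 2 + p) / d - p * (2 * k * w / (1 - k * w) ^ 2).re := by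
    have hpre : p * (2 * k * w / (1 - k * w) ^ 2).re ≤ p * (2 * t / d) :=
      mul_le_mul_of_nonneg_left hre hp₁.le
    have : ((4 - p) * t ^ 2 - 2 * p * t + p) / d + p * (2 * t / d)
        = ((4 - p) * t ^ 2 + p) / d := by
      field_simp; ring
    linarith
  exact ⟨by linarith, h2, h3⟩
end

section
/- Let T > 0, let k : [0,T] → ℂ be continuous with |k(t)| = 1 for all t, and let (φ_t)_{t ∈ [0,T]} be a family of holomorphic injective self-maps of 𝔻 with φ_0(z) = z and φ_t(0) = 0 for all t, such that for each z ∈ 𝔻 the map t ↦ φ_t(z) is differentiable on [0,T] with ∂φ_t(z)/∂t = - φ_t(z) (1 + k(t) φ_t(z)) / (1 - k(t) φ_t(z)), and also t ↦ φ_t'(z) is differentiable with ∂φ_t'(z)/∂t equal to the z-derivative of the right-hand side. Then for every p ∈ (0,2) and every z ∈ 𝔻 with z ≠ 0, the function t ↦ |φ_t'(z)|^{-p} |φ_t(z)|^{2p} / (1 - |φ_t(z)|^2)^2 is nonincreasing on [0,T]; in particular |φ_T'(z)|^{-p} |φ_T(z)/z|^{2p} / (1 - |φ_T(z)|^2)^2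 ≤ (1 - |z|^2)^{-2}. -/
open Metric MeasureTheory Set

lemma lowner_q_nonneg (p r : ℝ) (hp1 : 0 < p) (hp2 : p < 2) :
    0 ≤ p - 2*p*r + (4-p)*r^2 := by
  nlinarith [sq_nonneg ((4-p)*r - p)]

lemma lowner_key (p c r : ℝ) (hp1 : 0 < p) (hp2 : p < 2) (hc : |c| ≤ r) (hr : r < 1) :
    p * (2*c*(1+r^2) - 4*r^2) ≤ (p*(1-r^2) + 4*r^2) * (1 - 2*c + r^2) := by
  have hcr : c ≤ r := (abs_le.1 hc).2
  have hq := lowner_q_nonneg p r hp1 hp2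
  have h1 : 0 ≤ (1-r)^2 * (p - 2*p*r + (4-p)*r^2) := mul_nonneg (sq_nonneg _) hq
  have h2 : 0 ≤ (4*p + 8*r^2) * (r - c) := by
    apply mul_nonneg (by positivity) (by linarith)
  nlinarith [h1, h2]

lemma lowner_key' (p c s : ℝ) (hp1 : 0 < p) (hp2 : p < 2) (hc2 : c^2 ≤ s) (hs : s < 1) :
    p * (2*c*(1+s) - 4*s) ≤ (p*(1-s) + 4*s) * (1 - 2*c + s) := by
  have hs0 : 0 ≤ s := le_trans (sq_nonneg c) hc2
  have hr2 : Real.sqrt s ^ 2 = s := Real.sq_sqrt hs0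
  have hcabs : |c| ≤ Real.sqrt s := by
    rw [show |c| ≤ Real.sqrt s ↔ |c|^2 ≤ s from Real.le_sqrt (abs_nonneg c) hs0]
    rwa [sq_abs]
  have hr1 : Real.sqrt s < 1 := by
    nlinarith [Real.sqrt_nonneg s, hr2]
  have := lowner_key p c (Real.sqrt s) hp1 hp2 hcabs hr1
  rwa [hr2] at this

lemma lowner_real (p c d : ℝ) (hp1 : 0 < p) (hp2 : p < 2) (h1 : c^2 + d^2 < 1) :
    -p * ((-(1-(c^2+d^2))*(1-2*c+(c^2+d^2)) - (2*c*(1+(c^2+d^2))-4*(c^2+d^2)))/(1-2*c+(c^2+d^2))^2)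
    + 2*p * (-(1-(c^2+d^2))/(1-2*c+(c^2+d^2)))
    + 4 * (c^2+d^2) * (-(1-(c^2+d^2))/(1-2*c+(c^2+d^2))) / (1 - (c^2+d^2)) ≤ 0 := by
  have hm : 0 < 1-2*c+(c^2+d^2) := by
    by_contra h
    push_neg at h
    have h2 : (1-c)^2 ≤ 0 := by nlinarith [sq_nonneg d]
    have hc1 : c = 1 := by nlinarith [sq_nonneg (1-c)]
    have hd0 : d = 0 := by nlinarith [sq_nonneg d]
    rw [hc1, hd0] at h1; norm_num at h1
  have hs1 : (0:ℝ) < 1 - (c^2+d^2) := by linarith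
  have key := lowner_key' p c (c^2+d^2) hp1 hp2 (by nlinarith [sq_nonneg d]) (by linarith)
  have heq : -p * ((-(1-(c^2+d^2))*(1-2*c+(c^2+d^2)) - (2*c*(1+(c^2+d^2))-4*(c^2+d^2)))/(1-2*c+(c^2+d^2))^2)
      + 2*p * (-(1-(c^2+d^2))/(1-2*c+(c^2+d^2)))
      + 4 * (c^2+d^2) * (-(1-(c^2+d^2))/(1-2*c+(c^2+d^2))) / (1 - (c^2+d^2))
      = (p*(2*c*(1+(c^2+d^2))-4*(c^2+d^2)) - (p*(1-(c^2+d^2))+4*(c^2+d^2))*(1-2*c+(c^2+d^2)))/(1-2*c+(c^2+d^2))^2 := by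
    field_simp
    ring
  rw [heq]
  apply div_nonpos_of_nonpos_of_nonneg
  · linarith
  · positivity

lemma lowner_re_ineq (p : ℝ) (hp1 : 0 < p) (hp2 : p < 2) (u : ℂ) (hu : ‖u‖ < 1) :
    -p * (((-1 - 2*u + u^2)/(1-u)^2).re) + 2*p * ((-(1+u)/(1-u)).re)
      + 4 * Complex.normSq u * ((-(1+u)/(1-u)).re) / (1 - Complex.normSq u) ≤ 0 := by
  have hslt : Complex.normSq u < 1 := by
    have := Complex.sq_norm u
    nlinarith [norm_nonneg u]
  obtain ⟨c, d⟩ := u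
  have hre : (Complex.mk c d).re = c := rfl
  have him : (Complex.mk c d).im = d := rfl
  have hns : Complex.normSq (Complex.mk c d) = c^2 + d^2 := by
    simp [Complex.normSq_apply, hre, him]; ring
  rw [hns] at hslt ⊢
  have hn : Complex.normSq (1 - Complex.mk c d) = 1-2*c+(c^2+d^2) := by
    simp [Complex.normSq_apply, Complex.sub_re, Complex.sub_im, hre, him]; ring
  have e1 : ((-(1+Complex.mk c d)/(1-Complex.mk c d)).re)
      = -(1-(c^2+d^2))/(1-2*c+(c^2+d^2)) := by
    rw [Complex.div_re, hn, ← add_div]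
    congr 1
    simp [Complex.neg_re, Complex.neg_im, Complex.add_re, Complex.add_im,
      Complex.sub_re, Complex.sub_im, hre, him]
    ring
  have e2 : (((-1 - 2*Complex.mk c d + (Complex.mk c d)^2)/(1-Complex.mk c d)^2).re)
      = (-(1-(c^2+d^2))*(1-2*c+(c^2+d^2)) - (2*c*(1+(c^2+d^2))-4*(c^2+d^2)))/(1-2*c+(c^2+d^2))^2 := by
    rw [Complex.div_re]
    have hn2 : Complex.normSq ((1 - Complex.mk c d)^2) = (1-2*c+(c^2+d^2))^2 := by
      rw [map_pow, hn]
    rw [hn2, ← add_div]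
    congr 1
    simp [pow_two, Complex.mul_re, Complex.mul_im, Complex.sub_re, Complex.sub_im,
      Complex.add_re, Complex.add_im, Complex.neg_re, Complex.neg_im, hre, him]
    ring
  rw [e1, e2]
  exact lowner_real p c d hp1 hp2 hslt

lemma hasDerivWithinAt_normSq_comp {f : ℝ → ℂ} {f' : ℂ} {s : Set ℝ} {x : ℝ}
    (h : HasDerivWithinAt f f' s x) :
    HasDerivWithinAt (fun t => Complex.normSq (f t))
      (2 * (((starRingEnd ℂ) (f x)) * f').re) s x := by
  have hre : HasDerivWithinAt (fun t => (f t).re) f'.re s x :=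
    Complex.reCLM.hasFDerivAt.comp_hasDerivWithinAt x h
  have him : HasDerivWithinAt (fun t => (f t).im) f'.im s x :=
    Complex.imCLM.hasFDerivAt.comp_hasDerivWithinAt x h
  have key : (2 : ℝ) * (((starRingEnd ℂ) (f x)) * f').re
      = f'.re * (f x).re + (f x).re * f'.re + (f'.im * (f x).im + (f x).im * f'.im) := by
    simp [Complex.mul_re]; ring
  simp only [Complex.normSq_apply, key]
  exact (hre.mul hre).add (him.mul him)

/-- Monotonicity along a Löwner chain: if `(φ_t)_{t ∈ [0,T]}` is a Löwner chain of
conformal self-maps of `𝔻` fixing `0`, driven by a continuous unimodular function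
`k`, then for `p ∈ (0,2)` and `z ≠ 0` the quantity
`|φ_t'(z)|^{-p} |φ_t(z)|^{2p} / (1-|φ_t(z)|²)²` is nonincreasing in `t`; in
particular `|φ_T'(z)|^{-p} |φ_T(z)/z|^{2p} / (1-|φ_T(z)|²)² ≤ (1-|z|²)^{-2}`. -/
theorem lowner_chain_monotone
    (T : ℝ) (hT : 0 < T)
    (k : ℝ → ℂ)
    (hkcont : ContinuousOn k (Set.Icc 0 T))
    (hkmod : ∀ t ∈ Set.Icc (0:ℝ) T, ‖k t‖ = 1)
    (φ : ℝ → ℂ → ℂ)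
    (hmaps : ∀ t ∈ Set.Icc (0:ℝ) T, Set.MapsTo (φ t) (ball (0:ℂ) 1) (ball (0:ℂ) 1))
    (hholo : ∀ t ∈ Set.Icc (0:ℝ) T, DifferentiableOn ℂ (φ t) (ball (0:ℂ) 1))
    (hinj : ∀ t ∈ Set.Icc (0:ℝ) T, Set.InjOn (φ t) (ball (0:ℂ) 1))
    (hid : ∀ z ∈ ball (0:ℂ) 1, φ 0 z = z)
    (hfix : ∀ t ∈ Set.Icc (0:ℝ) T, φ t 0 = 0)
    (hode : ∀ z ∈ ball (0:ℂ) 1, ∀ t ∈ Set.Icc (0:ℝ) T,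
      HasDerivWithinAt (fun s => φ s z)
        (-(φ t z) * (1 + k t * φ t z) / (1 - k t * φ t z)) (Set.Icc 0 T) t)
    (hode' : ∀ z ∈ ball (0:ℂ) 1, ∀ t ∈ Set.Icc (0:ℝ) T,
      HasDerivWithinAt (fun s => deriv (φ s) z)
        (deriv (fun ζ => -(φ t ζ) * (1 + k t * φ t ζ) / (1 - k t * φ t ζ)) z)
        (Set.Icc 0 T) t)
    (p : ℝ) (hp₁ : 0 < p) (hp₂ : p < 2)
    (z : ℂ) (hz : z ∈ ball (0:ℂ) 1) (hz0 : z ≠ 0) :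
    AntitoneOn (fun t =>
        ‖deriv (φ t) z‖ ^ (-p) * ‖φ t z‖ ^ (2 * p) /
          (1 - ‖φ t z‖ ^ 2) ^ 2) (Set.Icc 0 T) ∧
    ‖deriv (φ T) z‖ ^ (-p) * ‖φ T z / z‖ ^ (2 * p) /
        (1 - ‖φ T z‖ ^ 2) ^ 2
      ≤ ((1 - ‖z‖ ^ 2) ^ 2)⁻¹ := by
  have h0mem : (0:ℝ) ∈ Set.Icc (0:ℝ) T := ⟨le_refl 0, hT.le⟩
  have hTmem : T ∈ Set.Icc (0:ℝ) T := ⟨hT.le, le_refl T⟩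
  have h0ball : (0:ℂ) ∈ ball (0:ℂ) 1 := mem_ball_self one_pos
  have hzabs : ‖z‖ < 1 := by
    simpa using mem_ball_zero_iff.1 hz
  -- basic facts about w t = φ t z
  have hwabs : ∀ t ∈ Set.Icc (0:ℝ) T, ‖φ t z‖ < 1 := fun t ht => by
    simpa using mem_ball_zero_iff.1 (hmaps t ht hz)
  have hwne : ∀ t ∈ Set.Icc (0:ℝ) T, φ t z ≠ 0 := by
    intro t ht h
    exact hz0 (hinj t ht hz h0ball (by rw [h, hfix t ht]))
  have hW : ∀ t ∈ Set.Icc (0:ℝ) T, HasDerivAt (φ t) (deriv (φ t) z) z := fun t ht =>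
    ((hholo t ht).differentiableAt (isOpen_ball.mem_nhds hz)).hasDerivAt
  -- u t and its properties
  have huabs : ∀ t ∈ Set.Icc (0:ℝ) T, ‖k t * φ t z‖ < 1 := fun t ht => by
    rw [norm_mul, hkmod t ht, one_mul]; exact hwabs t ht
  have h1u : ∀ t ∈ Set.Icc (0:ℝ) T, (1:ℂ) - k t * φ t z ≠ 0 := by
    intro t ht h
    have h2 : k t * φ t z = 1 := by linear_combination -h
    have h3 := huabs t ht
    rw [h2] at h3
    simp at h3
  -- derivative of t ↦ deriv (φ t) z
  have hWode : ∀ t ∈ Set.Icc (0:ℝ) T, HasDerivWithinAt (fun s => deriv (φ s) z)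
      (deriv (φ t) z * ((-1 - 2*(k t * φ t z) + (k t * φ t z)^2)/(1 - k t * φ t z)^2))
      (Set.Icc 0 T) t := by
    intro t ht
    have hWt := hW t ht
    have hnum : HasDerivAt (fun ζ => -(φ t ζ) * (1 + k t * φ t ζ))
        (-(deriv (φ t) z) * (1 + k t * φ t z) + -(φ t z) * (k t * deriv (φ t) z)) z :=
      hWt.neg.mul ((hWt.const_mul (k t)).const_add 1)
    have hden : HasDerivAt (fun ζ => 1 - k t * φ t ζ) (-(k t * deriv (φ t) z)) z :=
      (hWt.const_mul (k t)).const_sub 1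
    have hd := hnum.div hden (h1u t ht)
    have hderiv_eq : deriv (fun ζ => -(φ t ζ) * (1 + k t * φ t ζ) / (1 - k t * φ t ζ)) z
        = ((-(deriv (φ t) z) * (1 + k t * φ t z) + -(φ t z) * (k t * deriv (φ t) z))
              * (1 - k t * φ t z)
            - (-(φ t z) * (1 + k t * φ t z)) * (-(k t * deriv (φ t) z)))
            / (1 - k t * φ t z)^2 := hd.deriv
    have hval : ((-(deriv (φ t) z) * (1 + k t * φ t z) + -(φ t z) * (k t * deriv (φ t) z))
              * (1 - k t * φ t z)
            - (-(φ t z) * (1 + k t * φ t z)) * (-(k t * deriv (φ t) z)))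
            / (1 - k t * φ t z)^2
        = deriv (φ t) z * ((-1 - 2*(k t * φ t z) + (k t * φ t z)^2)/(1 - k t * φ t z)^2) := by
      field_simp
      ring
    have h0 := hode' z hz t ht
    rw [hderiv_eq, hval] at h0
    exact h0
  -- normSq derivatives
  have hNw : ∀ t ∈ Set.Icc (0:ℝ) T, HasDerivWithinAt (fun s => Complex.normSq (φ s z))
      (2 * Complex.normSq (φ t z) * ((-(1 + k t * φ t z)/(1 - k t * φ t z)).re))
      (Set.Icc 0 T) t := by
    intro t ht
    have h0 := hasDerivWithinAt_normSq_comp (hode z hz t ht)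
    have hc : (starRingEnd ℂ) (φ t z) * (-(φ t z) * (1 + k t * φ t z) / (1 - k t * φ t z))
        = (Complex.normSq (φ t z) : ℂ) * (-(1 + k t * φ t z)/(1 - k t * φ t z)) := by
      have hmc := Complex.mul_conj (φ t z)
      linear_combination ((-(1 + k t * φ t z))/(1 - k t * φ t z)) * hmc
    rw [hc, Complex.re_ofReal_mul] at h0
    convert h0 using 1
    ring
  have hNW : ∀ t ∈ Set.Icc (0:ℝ) T,
      HasDerivWithinAt (fun s => Complex.normSq (deriv (φ s) z))
      (2 * Complex.normSq (deriv (φ t) z)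
        * (((-1 - 2*(k t * φ t z) + (k t * φ t z)^2)/(1 - k t * φ t z)^2).re))
      (Set.Icc 0 T) t := by
    intro t ht
    have h0 := hasDerivWithinAt_normSq_comp (hWode t ht)
    have hc : (starRingEnd ℂ) (deriv (φ t) z)
          * (deriv (φ t) z * ((-1 - 2*(k t * φ t z) + (k t * φ t z)^2)/(1 - k t * φ t z)^2))
        = (Complex.normSq (deriv (φ t) z) : ℂ)
          * ((-1 - 2*(k t * φ t z) + (k t * φ t z)^2)/(1 - k t * φ t z)^2) := by
      have hmc := Complex.mul_conj (deriv (φ t) z)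
      linear_combination ((-1 - 2*(k t * φ t z) + (k t * φ t z)^2)/(1 - k t * φ t z)^2) * hmc
    rw [hc, Complex.re_ofReal_mul] at h0
    convert h0 using 1
    ring
  -- continuity and bound for the coefficient a t
  have hwcont : ContinuousOn (fun t => φ t z) (Set.Icc 0 T) :=
    fun t ht => (hode z hz t ht).continuousWithinAt
  have hucont : ContinuousOn (fun t => k t * φ t z) (Set.Icc 0 T) := hkcont.mul hwcont
  have hacont : ContinuousOn
      (fun t => (-1 - 2*(k t * φ t z) + (k t * φ t z)^2)/(1 - k t * φ t z)^2)
      (Set.Icc 0 T) := by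
    apply ContinuousOn.div
    · exact (continuousOn_const.sub (continuousOn_const.mul hucont)).add (hucont.pow 2)
    · exact (continuousOn_const.sub hucont).pow 2
    · exact fun t ht => pow_ne_zero 2 (h1u t ht)
  obtain ⟨M, hM⟩ := (isCompact_Icc).exists_bound_of_continuousOn hacont
  -- deriv (φ 0) z = 1
  have hW1 : deriv (φ 0) z = 1 := by
    have hev : (φ 0) =ᶠ[nhds z] id :=
      Filter.eventuallyEq_of_mem (isOpen_ball.mem_nhds hz) (fun x hx => hid x hx)
    rw [hev.deriv_eq, deriv_id]
  -- deriv (φ t) z ≠ 0 via a Gronwall-type monotonicity argument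
  have hWne : ∀ t ∈ Set.Icc (0:ℝ) T, deriv (φ t) z ≠ 0 := by
    have hexp : ∀ t : ℝ, HasDerivAt (fun t : ℝ => Real.exp (2*M*t))
        (Real.exp (2*M*t) * (2*M)) t := by
      intro t
      have h1 : HasDerivAt (fun t : ℝ => 2*M*t) (2*M) t := by
        simpa using (hasDerivAt_id t).const_mul (2*M)
      exact h1.exp
    have hR : ∀ t ∈ Set.Icc (0:ℝ) T,
        HasDerivWithinAt (fun t => Complex.normSq (deriv (φ t) z) * Real.exp (2*M*t))
        ((2 * Complex.normSq (deriv (φ t) z)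
            * (((-1 - 2*(k t * φ t z) + (k t * φ t z)^2)/(1 - k t * φ t z)^2).re))
            * Real.exp (2*M*t)
          + Complex.normSq (deriv (φ t) z) * (Real.exp (2*M*t) * (2*M)))
        (Set.Icc 0 T) t :=
      fun t ht => (hNW t ht).mul ((hexp t).hasDerivWithinAt)
    have hRmono : MonotoneOn (fun t => Complex.normSq (deriv (φ t) z) * Real.exp (2*M*t))
        (Set.Icc 0 T) := by
      apply monotoneOn_of_hasDerivWithinAt_nonneg (convex_Icc 0 T)
        (fun x hx => (hR x hx).continuousWithinAt)
        (fun x hx => ((hR x (interior_subset hx)).mono interior_subset))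
      intro x hx
      have hx' : x ∈ Set.Icc (0:ℝ) T := interior_subset hx
      have e1 : (0:ℝ) < Real.exp (2*M*x) := Real.exp_pos _
      have e2 : (0:ℝ) ≤ Complex.normSq (deriv (φ x) z) := Complex.normSq_nonneg _
      have e3 : |(((-1 - 2*(k x * φ x z) + (k x * φ x z)^2)/(1 - k x * φ x z)^2).re)| ≤ M := by
        refine le_trans (Complex.abs_re_le_norm _) ?_
        simpa using hM x hx'
      have e4 : -M ≤ (((-1 - 2*(k x * φ x z) + (k x * φ x z)^2)/(1 - k x * φ x z)^2).re) :=
        neg_le_of_abs_le e3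
      nlinarith [mul_nonneg (mul_nonneg e2 e1.le)
        (by linarith : (0:ℝ) ≤ (((-1 - 2*(k x * φ x z) + (k x * φ x z)^2)/(1 - k x * φ x z)^2).re) + M)]
    intro t ht hzero
    have hmono : Complex.normSq (deriv (φ 0) z) * Real.exp (2*M*0)
        ≤ Complex.normSq (deriv (φ t) z) * Real.exp (2*M*t) := hRmono h0mem ht ht.1
    rw [hzero, hW1] at hmono
    simp at hmono
    exact absurd hmono (by norm_num)
  -- positivity facts
  have hNwpos : ∀ t ∈ Set.Icc (0:ℝ) T, 0 < Complex.normSq (φ t z) :=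
    fun t ht => Complex.normSq_pos.2 (hwne t ht)
  have hNWpos : ∀ t ∈ Set.Icc (0:ℝ) T, 0 < Complex.normSq (deriv (φ t) z) :=
    fun t ht => Complex.normSq_pos.2 (hWne t ht)
  have h1Nw : ∀ t ∈ Set.Icc (0:ℝ) T, 0 < 1 - Complex.normSq (φ t z) := by
    intro t ht
    have := hwabs t ht
    have h2 : Complex.normSq (φ t z) = ‖φ t z‖ ^ 2 := (Complex.sq_norm _).symm
    nlinarith [norm_nonneg (φ t z)]
  -- the logarithmic quantity G
  set G : ℝ → ℝ := fun t => -(p/2) * Real.log (Complex.normSq (deriv (φ t) z))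
      + p * Real.log (Complex.normSq (φ t z))
      - 2 * Real.log (1 - Complex.normSq (φ t z)) with hGdef
  set G' : ℝ → ℝ := fun t => -(p/2) * ((2 * Complex.normSq (deriv (φ t) z)
        * (((-1 - 2*(k t * φ t z) + (k t * φ t z)^2)/(1 - k t * φ t z)^2).re))
        / (Complex.normSq (deriv (φ t) z)))
      + p * ((2 * Complex.normSq (φ t z) * ((-(1 + k t * φ t z)/(1 - k t * φ t z)).re))
        / (Complex.normSq (φ t z)))
      - 2 * ((-(2 * Complex.normSq (φ t z) * ((-(1 + k t * φ t z)/(1 - k t * φ t z)).re)))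
        / (1 - Complex.normSq (φ t z))) with hG'def
  have hG : ∀ t ∈ Set.Icc (0:ℝ) T, HasDerivWithinAt G (G' t) (Set.Icc 0 T) t := by
    intro t ht
    exact ((((hNW t ht).log (hNWpos t ht).ne').const_mul (-(p/2))).add
      (((hNw t ht).log (hNwpos t ht).ne').const_mul p)).sub
      ((((hNw t ht).const_sub 1).log (h1Nw t ht).ne').const_mul 2)
  have hG'le : ∀ t ∈ Set.Icc (0:ℝ) T, G' t ≤ 0 := by
    intro t ht
    have hnsu : Complex.normSq (k t * φ t z) = Complex.normSq (φ t z) := by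
      rw [map_mul, Complex.normSq_eq_norm_sq, hkmod t ht]
      norm_num
    have hkey := lowner_re_ineq p hp₁ hp₂ (k t * φ t z) (huabs t ht)
    rw [hnsu] at hkey
    have heq : G' t = -p * (((-1 - 2*(k t * φ t z) + (k t * φ t z)^2)/(1 - k t * φ t z)^2).re)
        + 2*p * ((-(1 + k t * φ t z)/(1 - k t * φ t z)).re)
        + 4 * Complex.normSq (φ t z) * ((-(1 + k t * φ t z)/(1 - k t * φ t z)).re)
          / (1 - Complex.normSq (φ t z)) := by
      rw [hG'def]
      have d1 := (hNWpos t ht).ne'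
      have d2 := (hNwpos t ht).ne'
      have d3 := (h1Nw t ht).ne'
      field_simp
      ring
    rw [heq]
    exact hkey
  have hGanti : AntitoneOn G (Set.Icc 0 T) := by
    apply antitoneOn_of_hasDerivWithinAt_nonpos (convex_Icc 0 T)
      (fun x hx => (hG x hx).continuousWithinAt)
      (fun x hx => ((hG x (interior_subset hx)).mono interior_subset))
    exact fun x hx => hG'le x (interior_subset hx)
  -- the statement quantity equals exp (G t)
  have hFeq : ∀ t ∈ Set.Icc (0:ℝ) T,
      ‖deriv (φ t) z‖ ^ (-p) * ‖φ t z‖ ^ (2 * p) /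
        (1 - ‖φ t z‖ ^ 2) ^ 2 = Real.exp (G t) := by
    intro t ht
    have hWpos : 0 < ‖deriv (φ t) z‖ := norm_pos_iff.mpr (hWne t ht)
    have hwpos : 0 < ‖φ t z‖ := norm_pos_iff.mpr (hwne t ht)
    have h1N := h1Nw t ht
    have lA : Real.log (Complex.normSq (deriv (φ t) z))
        = 2 * Real.log (‖deriv (φ t) z‖) := by
      rw [← Complex.sq_norm, Real.log_pow]
      norm_num
    have lB : Real.log (Complex.normSq (φ t z)) = 2 * Real.log (‖φ t z‖) := by
      rw [← Complex.sq_norm, Real.log_pow]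
      norm_num
    have e3 : ((1 : ℝ) - ‖φ t z‖^2)^2
        = Real.exp (2 * Real.log (1 - Complex.normSq (φ t z))) := by
      rw [Complex.sq_norm,
        show (2:ℝ) * Real.log (1 - Complex.normSq (φ t z))
          = ((2:ℕ):ℝ) * Real.log (1 - Complex.normSq (φ t z)) by norm_num,
        Real.exp_nat_mul, Real.exp_log h1N]
    rw [Real.rpow_def_of_pos hWpos, Real.rpow_def_of_pos hwpos, e3,
      ← Real.exp_add, ← Real.exp_sub]
    congr 1
    rw [hGdef]
    simp only
    rw [lA, lB]
    ring
  constructor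
  · intro a ha b hb hab
    simp only
    rw [hFeq a ha, hFeq b hb]
    exact Real.exp_le_exp.2 (hGanti ha hb hab)
  · have hFT := hGanti h0mem hTmem hT.le
    have hle : ‖deriv (φ T) z‖ ^ (-p) * ‖φ T z‖ ^ (2 * p) /
        (1 - ‖φ T z‖ ^ 2) ^ 2
        ≤ ‖deriv (φ 0) z‖ ^ (-p) * ‖φ 0 z‖ ^ (2 * p) /
        (1 - ‖φ 0 z‖ ^ 2) ^ 2 := by
      rw [hFeq T hTmem, hFeq 0 h0mem]
      exact Real.exp_le_exp.2 hFT
    rw [hW1, hid z hz] at hle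
    simp only [norm_one, Real.one_rpow, one_mul] at hle
    have hzpos : 0 < ‖z‖ := norm_pos_iff.mpr hz0
    have hzp : 0 < ‖z‖ ^ (2*p) := Real.rpow_pos_of_pos hzpos _
    have h1z : (0:ℝ) < 1 - ‖z‖ ^ 2 := by
      nlinarith [hzabs, norm_nonneg z]
    have hden : (0:ℝ) < (1 - ‖z‖ ^ 2)^2 := by positivity
    have habsdiv : ‖φ T z / z‖ ^ (2*p)
        = ‖φ T z‖ ^ (2*p) / ‖z‖ ^ (2*p) := by
      rw [norm_div, Real.div_rpow (norm_nonneg _) (norm_nonneg _)]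
    rw [habsdiv]
    rw [le_div_iff₀ hden] at hle
    rw [show ‖deriv (φ T) z‖ ^ (-p)
          * (‖φ T z‖ ^ (2*p) / ‖z‖ ^ (2*p))
          / (1 - ‖φ T z‖ ^ 2) ^ 2
        = (‖deriv (φ T) z‖ ^ (-p) * ‖φ T z‖ ^ (2*p)
          / (1 - ‖φ T z‖ ^ 2) ^ 2) / ‖z‖ ^ (2*p) by ring]
    rw [div_le_iff₀ hzp]
    calc ‖deriv (φ T) z‖ ^ (-p) * ‖φ T z‖ ^ (2*p)
          / (1 - ‖φ T z‖ ^ 2) ^ 2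
        ≤ ‖z‖ ^ (2*p) / (1 - ‖z‖ ^ 2) ^ 2 := by
          rw [le_div_iff₀ hden]; exact hle
      _ = ((1 - ‖z‖ ^ 2) ^ 2)⁻¹ * ‖z‖ ^ (2*p) := by ring
end
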